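/- (Strong ergodicity criterion comparison.) For a birth-death process on ℕ with μ = Σ μ_i < ∞, the condition S := Σ_{n≥0} (1/(μ_n b_n)) μ[n+1,∞) < ∞ implies δ := sup_{n≥1} μ[n,∞) Σ_{j≤n-1} 1/(μ_j b_j) < ∞; that is, the strong-ergodicity sum being finite implies the Poincaré (exponential ergodicity) criterion holds, and moreover δ ≤ S. -/

import Mathlib

/-- Strong-ergodicity sum controls the Poincaré criterion: if
S = Σ_{n≥0} (1/(μ_n b_n)) μ[n+1,∞) < ∞ then for every n ≥ 1,
μ[n,∞) Σ_{j≤n-1} 1/(μ_j b_j) ≤ S; in particular δ ≤ S < ∞. -/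
theorem stmt12 (μ b : ℕ → ℝ) (hμ : ∀ i, 0 < μ i) (hb : ∀ i, 0 < b i)
    (hsum : Summable μ)
    (hS : Summable (fun n => (1/(μ n * b n)) * ∑' j, μ (j+(n+1)))) :
    ∀ n ≥ 1, (∑' j, μ (j+n)) * (∑ j ∈ Finset.range n, 1/(μ j * b j)) ≤
      ∑' n, (1/(μ n * b n)) * ∑' j, μ (j+(n+1)) := by
  intro n hn
  set T : ℕ → ℝ := fun m => ∑' j, μ (j + m) with hT
  have hTsum : ∀ m, Summable (fun j => μ (j + m)) := fun m =>
    (summable_nat_add_iff m).2 hsum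
  have hTnn : ∀ m, 0 ≤ T m := fun m => tsum_nonneg (fun j => (hμ _).le)
  have hstep : ∀ m, T m = μ m + T (m + 1) := by
    intro m
    have h := Summable.tsum_eq_zero_add (hTsum m)
    simp only [zero_add] at h
    rw [hT]
    simp only
    rw [h]
    congr 1
    apply tsum_congr
    intro j
    congr 1
    omega
  have hanti : Antitone T := antitone_nat_of_succ_le (fun m => by
    rw [hstep m]; linarith [(hμ m).le])
  have hnn : ∀ j, 0 ≤ (1/(μ j * b j)) * T (j+1) := fun j =>
    mul_nonneg (one_div_nonneg.mpr (mul_pos (hμ j) (hb j)).le) (hTnn _)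
  calc (∑' j, μ (j + n)) * (∑ j ∈ Finset.range n, 1/(μ j * b j))
      = ∑ j ∈ Finset.range n, (1/(μ j * b j)) * T n := by
        rw [Finset.mul_sum]; exact Finset.sum_congr rfl (fun j _ => mul_comm _ _)
    _ ≤ ∑ j ∈ Finset.range n, (1/(μ j * b j)) * T (j+1) := by
        apply Finset.sum_le_sum
        intro j hj
        have : j + 1 ≤ n := Finset.mem_range.mp hj
        exact mul_le_mul_of_nonneg_left (hanti this) (one_div_nonneg.mpr (mul_pos (hμ j) (hb j)).le)
    _ ≤ ∑' m, (1/(μ m * b m)) * T (m+1) :=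
        Summable.sum_le_tsum (Finset.range n) (fun j _ => hnn j) hS
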